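/- arXiv:2111.13465 — 2 statements merged into one kernel-verified Lean document; each statement's English description precedes it below -/
import Mathlib

section
/- In the ring ℤ[σ_1,...,σ_{n-k}, q] with the conventions σ_0 = 1, σ_m = 0 for m < 0, and the extended definition σ_r := (−1)^{ℓ(k+1)} q^ℓ σ_p whenever r = ℓn + p with 0 ≤ p < n and n−k < p (i.e., σ_p := 0 if n−k < p < n), the following holds: if a partition λ with at most k parts is contained in a shape admitting an n-rim hook starting at the end of row ℓ_1 and ending in row ℓ_2 (so that the diagram λ' obtained by deleting the rim hook is a partition), then det(σ_{λ_i + j − i})_{1≤i,j≤k} = (−1)^{k−w} q · det(σ_{λ'_i + j − i})_{1≤i,j≤k}, where w = ℓ_2 − ℓ_1 + 1 is the number of rows occupied by the rim hook. -/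
open MvPolynomial

/-- The quantum variable `q` in `ℤ[σ_1, ..., σ_{n-k}, q]`. -/
noncomputable def qv (n k : ℕ) : MvPolynomial (Fin (n - k) ⊕ Unit) ℤ :=
  X (Sum.inr ())

/-- `σ_p` for `0 ≤ p < n`: `σ_0 = 1`, a variable for `1 ≤ p ≤ n - k`, `0` for
`n - k < p`. -/
noncomputable def sigP (n k : ℕ) (p : ℕ) : MvPolynomial (Fin (n - k) ⊕ Unit) ℤ :=
  if p = 0 then 1 else if h : p - 1 < n - k then X (Sum.inl ⟨p - 1, h⟩) else 0

/-- The extended class `σ_m` for `m : ℤ`: `σ_m = 0` for `m < 0`, and for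
`m = ℓ n + p` with `0 ≤ p < n`, `σ_m = (-1)^{ℓ(k+1)} q^ℓ σ_p`. -/
noncomputable def sigExt (n k : ℕ) (m : ℤ) : MvPolynomial (Fin (n - k) ⊕ Unit) ℤ :=
  if m < 0 then 0
  else (-1) ^ ((m.toNat / n) * (k + 1)) * qv n k ^ (m.toNat / n) * sigP n k (m.toNat % n)

lemma sub_rule (n k : ℕ) (hkn : k < n) (m : ℤ) (hm : (n : ℤ) - k < m) :
    sigExt n k m = (-1) ^ (k + 1) * qv n k * sigExt n k (m - n) := by
  have hn : 0 < n := by omega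
  have hm0 : 0 ≤ m := by omega
  by_cases hmn : m < n
  · have h1 : sigExt n k m = 0 := by
      have hdiv : m.toNat / n = 0 := Nat.div_eq_of_lt (by omega)
      have hmod : m.toNat % n = m.toNat := Nat.mod_eq_of_lt (by omega)
      have hp : sigP n k m.toNat = 0 := by
        rw [sigP, if_neg (by omega), dif_neg (by omega)]
      rw [sigExt, if_neg (by omega), hdiv, hmod, hp, mul_zero]
    have h2 : sigExt n k (m - n) = 0 := by
      rw [sigExt, if_pos (by omega)]
    rw [h1, h2, mul_zero]
  · have htn : m.toNat = (m - n).toNat + n := by omega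
    have hdiv : m.toNat / n = (m - n).toNat / n + 1 := by
      rw [htn, Nat.add_div_right _ hn]
    have hmod : m.toNat % n = (m - n).toNat % n := by
      rw [htn, Nat.add_mod_right]
    rw [sigExt, sigExt, if_neg (by omega), if_neg (by omega), hdiv, hmod]
    ring

/-- Rim hook algorithm: if the partition `λ'` is obtained from `λ` (both with at most
`k` parts, given by 1-based integer-valued part functions) by removing an `n`-rim hook
starting at the end of row `ℓ₁` and ending in row `ℓ₂`, then the Giambelli determinants
satisfy `σ_λ = (-1)^{k - w} q σ_{λ'}` with `w = ℓ₂ - ℓ₁ + 1` the number of rows occupied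
by the rim hook. -/
theorem rim_hook_algorithm (n k : ℕ) (hkn : k < n) (lam lam' : ℕ → ℤ) (ℓ₁ ℓ₂ : ℕ)
    (hℓ₁ : 1 ≤ ℓ₁) (hℓ₁₂ : ℓ₁ ≤ ℓ₂) (hℓ₂ : ℓ₂ ≤ k)
    (hanti : ∀ i, 1 ≤ i → i < k → lam (i + 1) ≤ lam i)
    (hnonneg : 0 ≤ lam k)
    (h1 : ∀ i, 1 ≤ i → i < ℓ₁ → lam' i = lam i)
    (h2 : ∀ i, ℓ₂ < i → i ≤ k → lam' i = lam i)
    (h3 : ∀ i, ℓ₁ ≤ i → i + 1 ≤ ℓ₂ → lam' i = lam (i + 1) - 1)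
    (h4 : lam' ℓ₂ = lam ℓ₁ - (n : ℤ) + (ℓ₂ : ℤ) - (ℓ₁ : ℤ))
    (hanti' : ∀ i, 1 ≤ i → i < k → lam' (i + 1) ≤ lam' i)
    (hnonneg' : 0 ≤ lam' k) :
    Matrix.det (Matrix.of fun i j : Fin k =>
        sigExt n k (lam (i.val + 1) + (j.val : ℤ) - (i.val : ℤ))) =
      (-1) ^ (k - (ℓ₂ - ℓ₁ + 1)) * qv n k *
        Matrix.det (Matrix.of fun i j : Fin k =>
          sigExt n k (lam' (i.val + 1) + (j.val : ℤ) - (i.val : ℤ))) := by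
  obtain ⟨k', rfl⟩ : ∃ k', k = k' + 1 := ⟨k - 1, by omega⟩
  -- nonnegativity of lam' ℓ₂
  have mono : ∀ d : ℕ, ℓ₂ + d ≤ k' + 1 → lam' (ℓ₂ + d) ≤ lam' ℓ₂ := by
    intro d
    induction d with
    | zero => simp
    | succ d ih =>
      intro h
      have h5 := hanti' (ℓ₂ + d) (by omega) (by omega)
      have he : ℓ₂ + (d + 1) = (ℓ₂ + d) + 1 := by omega
      rw [he]
      exact le_trans h5 (ih (by omega))
  have hlam2 : 0 ≤ lam' ℓ₂ := by
    have := mono (k' + 1 - ℓ₂) (by omega)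
    rw [Nat.add_sub_cancel' hℓ₂] at this
    exact le_trans hnonneg' this
  have hlam : (n : ℤ) + (ℓ₁ : ℤ) - (ℓ₂ : ℤ) ≤ lam ℓ₁ := by omega
  -- setup
  set Poly := MvPolynomial (Fin (n - (k' + 1)) ⊕ Unit) ℤ with hPoly
  set M : Matrix (Fin (k' + 1)) (Fin (k' + 1)) Poly := Matrix.of fun i j : Fin (k' + 1) =>
      sigExt n (k' + 1) (lam (i.val + 1) + (j.val : ℤ) - (i.val : ℤ)) with hM
  set M' : Matrix (Fin (k' + 1)) (Fin (k' + 1)) Poly := Matrix.of fun i j : Fin (k' + 1) =>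
      sigExt n (k' + 1) (lam' (i.val + 1) + (j.val : ℤ) - (i.val : ℤ)) with hM'
  have hℓ₁K : ℓ₁ - 1 < k' + 1 := by omega
  set r1 : Fin (k' + 1) := ⟨ℓ₁ - 1, hℓ₁K⟩ with hr1
  set g : Fin (k' + 1) → Poly := fun j =>
      sigExt n (k' + 1) (lam ℓ₁ - (n : ℤ) + (j.val : ℤ) - ((ℓ₁ : ℤ) - 1)) with hg
  set N : Matrix (Fin (k' + 1)) (Fin (k' + 1)) Poly := M.updateRow r1 g with hN
  -- Step 1 : det M = (-1)^(k+2) * q * det N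
  have hrow : M r1 = fun j => ((-1 : Poly) ^ (k' + 1 + 1) * qv n (k' + 1)) • g j := by
    funext j
    have harg : lam ((ℓ₁ - 1) + 1) + (j.val : ℤ) - ((ℓ₁ - 1 : ℕ) : ℤ)
        = lam ℓ₁ + (j.val : ℤ) - ((ℓ₁ : ℤ) - 1) := by
      rw [Nat.sub_add_cancel hℓ₁]
      push_cast [Nat.cast_sub hℓ₁]
      ring
    have hMr1 : M r1 j = sigExt n (k' + 1) (lam ℓ₁ + (j.val : ℤ) - ((ℓ₁ : ℤ) - 1)) := by
      rw [hM]
      show sigExt n (k' + 1) (lam ((ℓ₁ - 1) + 1) + (j.val : ℤ) - ((ℓ₁ - 1 : ℕ) : ℤ)) = _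
      rw [harg]
    rw [hMr1, sub_rule n (k' + 1) hkn _ (by
      have hj : (0:ℤ) ≤ (j.val : ℤ) := Int.natCast_nonneg _
      omega)]
    rw [smul_eq_mul, hg]
    congr 2
    ring
  have step1 : M.det = ((-1 : Poly) ^ (k' + 1 + 1) * qv n (k' + 1)) * N.det := by
    conv_lhs => rw [← Matrix.updateRow_eq_self M r1, hrow]
    exact Matrix.det_updateRow_smul M r1 _ g
  -- the permutation
  set w2 : Fin (k' + 1) := ⟨ℓ₂ - ℓ₁, by omega⟩ with hw2
  set c : Equiv.Perm (Fin (k' + 1)) := Equiv.addLeft r1 with hc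
  set π : Equiv.Perm (Fin (k' + 1)) := c * Fin.cycleRange w2 * c⁻¹ with hπdef
  have hcapp : ∀ y : Fin (k' + 1), c y = r1 + y := fun y => rfl
  have hcinv : ∀ x y : Fin (k' + 1), c y = x → c⁻¹ x = y := by
    intro x y h
    rw [← h]; exact c.symm_apply_apply y
  have hπapp : ∀ x : Fin (k' + 1), π x = c (Fin.cycleRange w2 (c⁻¹ x)) := by
    intro x
    rw [hπdef]
    rfl
  -- case A : fixed points
  have hA : ∀ x : Fin (k' + 1), (x.val + 1 < ℓ₁ ∨ ℓ₂ ≤ x.val) → π x = x := by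
    intro x hx
    have hxlt := x.isLt
    have hy : ∃ y : Fin (k' + 1), c y = x ∧ (ℓ₂ - ℓ₁ < y.val) := by
      rcases hx with hx | hx
      · refine ⟨⟨x.val + (k' + 1) - (ℓ₁ - 1), by omega⟩, ?_, by
          simp only [Fin.val_mk]; omega⟩
        apply Fin.ext
        rw [hcapp, hr1]
        simp only [Fin.val_add_eq_ite, Fin.val_mk]
        split_ifs <;> omega
      · refine ⟨⟨x.val - (ℓ₁ - 1), by omega⟩, ?_, by
          simp only [Fin.val_mk]; omega⟩
        apply Fin.ext
        rw [hcapp, hr1]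
        simp only [Fin.val_add_eq_ite, Fin.val_mk]
        split_ifs <;> omega
    obtain ⟨y, hcy, hygt⟩ := hy
    rw [hπapp, hcinv x y hcy, Fin.cycleRange_of_gt (by
      rw [Fin.lt_def, hw2]; simp only [Fin.val_mk]; omega), hcy]
  -- case B : shift
  have hB : ∀ x : Fin (k' + 1), ℓ₁ - 1 ≤ x.val → x.val + 1 < ℓ₂ →
      (π x).val = x.val + 1 := by
    intro x hx1 hx2
    have hxlt := x.isLt
    have hone : (1 : Fin (k' + 1)).val = 1 := by
      rw [Fin.val_one']; exact Nat.mod_eq_of_lt (by omega)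
    have hy : c ⟨x.val - (ℓ₁ - 1), by omega⟩ = x := by
      apply Fin.ext
      rw [hcapp, hr1]
      simp only [Fin.val_add_eq_ite, Fin.val_mk]
      split_ifs <;> omega
    rw [hπapp, hcinv x _ hy, Fin.cycleRange_of_lt (by
      rw [Fin.lt_def, hw2]; simp only [Fin.val_mk]; omega)]
    rw [hcapp, hr1]
    simp only [Fin.val_add_eq_ite, Fin.val_mk, hone]
    split_ifs <;> omega
  -- case C : the end row maps to r1
  have hC : ∀ x : Fin (k' + 1), x.val + 1 = ℓ₂ → π x = r1 := by
    intro x hx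
    have hxlt := x.isLt
    have hy : c w2 = x := by
      apply Fin.ext
      rw [hcapp, hr1, hw2]
      simp only [Fin.val_add_eq_ite, Fin.val_mk]
      split_ifs <;> omega
    rw [hπapp, hcinv x _ hy, Fin.cycleRange_self]
    apply Fin.ext
    rw [hcapp, hr1]
    rw [Fin.val_add, Fin.val_zero, Nat.add_zero]
    exact Nat.mod_eq_of_lt hℓ₁K
  -- sign of π
  have hsign : Equiv.Perm.sign π = (-1 : ℤˣ) ^ (ℓ₂ - ℓ₁) := by
    rw [hπdef, map_mul, map_mul, map_inv, mul_comm (Equiv.Perm.sign c),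
      mul_assoc, mul_inv_cancel, mul_one, Fin.sign_cycleRange]
  -- M' is N permuted
  have hM'N : M' = N.submatrix π id := by
    refine Matrix.ext fun i j => ?_
    rw [Matrix.submatrix_apply, id_eq]
    rcases lt_or_ge (i.val + 1) ℓ₁ with hi | hi
    · rw [hA i (Or.inl hi), hN, Matrix.updateRow_ne (by
        intro h
        have := congrArg Fin.val h
        simp only [hr1, Fin.val_mk] at this
        omega)]
      show sigExt n (k' + 1) (lam' (i.val + 1) + (j.val : ℤ) - (i.val : ℤ))
        = sigExt n (k' + 1) (lam (i.val + 1) + (j.val : ℤ) - (i.val : ℤ))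
      rw [h1 (i.val + 1) (by omega) hi]
    rcases lt_or_ge (i.val + 1) ℓ₂ with hi2 | hi2
    · have hval := hB i (by omega) hi2
      have hne : π i ≠ r1 := by
        intro h
        have := congrArg Fin.val h
        rw [hval, hr1] at this
        simp only [Fin.val_mk] at this
        omega
      rw [hN, Matrix.updateRow_ne hne]
      show sigExt n (k' + 1) (lam' (i.val + 1) + (j.val : ℤ) - (i.val : ℤ))
        = sigExt n (k' + 1) (lam ((π i).val + 1) + (j.val : ℤ) - (((π i).val : ℕ) : ℤ))
      rw [hval, h3 (i.val + 1) (by omega) (by omega)]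
      congr 1
      push_cast
      ring
    rcases Nat.lt_or_ge i.val ℓ₂ with hi3 | hi3
    · have hieq : i.val + 1 = ℓ₂ := by omega
      rw [hC i hieq, hN, Matrix.updateRow_self]
      show sigExt n (k' + 1) (lam' (i.val + 1) + (j.val : ℤ) - (i.val : ℤ))
        = sigExt n (k' + 1) (lam ℓ₁ - (n : ℤ) + (j.val : ℤ) - ((ℓ₁ : ℤ) - 1))
      rw [hieq, h4]
      congr 1
      have : (i.val : ℤ) = (ℓ₂ : ℤ) - 1 := by omega
      rw [this]
      ring
    · rw [hA i (Or.inr hi3), hN, Matrix.updateRow_ne (by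
        intro h
        have := congrArg Fin.val h
        simp only [hr1, Fin.val_mk] at this
        omega)]
      show sigExt n (k' + 1) (lam' (i.val + 1) + (j.val : ℤ) - (i.val : ℤ))
        = sigExt n (k' + 1) (lam (i.val + 1) + (j.val : ℤ) - (i.val : ℤ))
      rw [h2 (i.val + 1) (by omega) (by omega)]
  -- determinants
  have step2 : M'.det = ((-1 : Poly) ^ (ℓ₂ - ℓ₁)) * N.det := by
    rw [hM'N, Matrix.det_permute, hsign]
    norm_cast
  have hsq : ((-1 : Poly) ^ (ℓ₂ - ℓ₁)) * ((-1 : Poly) ^ (ℓ₂ - ℓ₁)) = 1 := by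
    rw [← pow_add, ← two_mul, pow_mul, neg_one_sq, one_pow]
  have hdN : N.det = ((-1 : Poly) ^ (ℓ₂ - ℓ₁)) * M'.det := by
    rw [step2, ← mul_assoc, hsq, one_mul]
  have hexp : (-1 : Poly) ^ (k' + 1 + 1) * (-1 : Poly) ^ (ℓ₂ - ℓ₁)
      = (-1 : Poly) ^ (k' + 1 - (ℓ₂ - ℓ₁ + 1)) := by
    rw [← pow_add]
    have he : (k' + 1 + 1) + (ℓ₂ - ℓ₁) = (k' + 1 - (ℓ₂ - ℓ₁ + 1)) + 2 * (ℓ₂ - ℓ₁ + 1) := by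
      omega
    rw [he, pow_add, pow_mul, neg_one_sq, one_pow, mul_one]
  calc M.det = ((-1 : Poly) ^ (k' + 1 + 1) * qv n (k' + 1)) * N.det := step1
    _ = (-1 : Poly) ^ (k' + 1 - (ℓ₂ - ℓ₁ + 1)) * qv n (k' + 1) * M'.det := by
        rw [hdN, ← hexp]; ring
end

section
/- In ℤ[σ_1,...,σ_{n-k}, q] with conventions σ_0 = 1, σ_m = 0 for m < 0 or n−k < m < n, and σ_n := (−1)^{k+1} q: for any partition λ' with λ'_1 = n−k+1 and λ'_i ≤ n−k for i ≥ 2, with at most k parts, the Giambelli determinant satisfies det(σ_{λ'_i + j − i})_{1≤i,j≤k} = q · det(σ_{λ'_{i+1} − 1 + j − i})_{1≤i,j≤k−1}, i.e., σ_{λ'} = q · σ_{(λ'_2 − 1, ..., λ'_k − 1)}. -/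
open MvPolynomial

lemma sigExt_gap (n k : ℕ) (hkn : k < n) (m : ℤ) (h1 : (n:ℤ)-(k:ℤ) < m) (h2 : m < n) :
    sigExt n k m = 0 := by
  have hm0 : ¬ m < 0 := by omega
  rw [sigExt, if_neg hm0]
  have h1' : n - k < m.toNat := by omega
  have h2' : m.toNat < n := by omega
  rw [Nat.div_eq_of_lt h2', Nat.mod_eq_of_lt h2']
  rw [sigP, if_neg (by omega), dif_neg (by omega)]
  ring

lemma sigExt_n (n k : ℕ) (hkn : k < n) : sigExt n k n = (-1)^(k+1) * qv n k := by
  have hn : (0:ℤ) ≤ n := by positivity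
  rw [sigExt, if_neg (by omega)]
  have : (n:ℤ).toNat = n := by omega
  rw [this, Nat.div_self (by omega), Nat.mod_self, sigP, if_pos rfl]
  ring

/-- One-rim-hook computation in quantum Pieri: for a partition `λ'` with at most `k`
parts, `λ'_1 = n - k + 1` and `λ'_i ≤ n - k` for `i ≥ 2`, the Giambelli determinant
factors as `σ_{λ'} = q · σ_{(λ'_2 - 1, ..., λ'_k - 1)}`. -/
theorem quantum_pieri_rim_hook (n k : ℕ) (hkn : k < n) (hk : 1 ≤ k) (lam' : ℕ → ℤ)
    (hfirst : lam' 1 = (n : ℤ) - (k : ℤ) + 1)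
    (hbound : ∀ i, 2 ≤ i → i ≤ k → lam' i ≤ (n : ℤ) - (k : ℤ))
    (hanti : ∀ i, 1 ≤ i → i < k → lam' (i + 1) ≤ lam' i)
    (hnonneg : ∀ i, 2 ≤ i → i ≤ k → 0 ≤ lam' i) :
    Matrix.det (Matrix.of fun i j : Fin k =>
        sigExt n k (lam' (i.val + 1) + (j.val : ℤ) - (i.val : ℤ))) =
      qv n k * Matrix.det (Matrix.of fun i j : Fin (k - 1) =>
        sigExt n k (lam' (i.val + 2) - 1 + (j.val : ℤ) - (i.val : ℤ))) := by
  obtain ⟨m, rfl⟩ : ∃ m, k = m + 1 := ⟨k - 1, by omega⟩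
  rw [Matrix.det_succ_row_zero]
  rw [Finset.sum_eq_single (Fin.last m)]
  · simp only [Matrix.of_apply, Fin.val_last, Fin.val_zero]
    have he : lam' (0 + 1) + ((m:ℤ)) - (((0:ℕ)):ℤ) = (n:ℤ) := by
      show lam' 1 + _ - _ = _
      rw [hfirst]; push_cast; omega
    rw [he, sigExt_n n (m+1) hkn]
    have hsub : (Matrix.of fun i j : Fin (m+1) =>
        sigExt n (m+1) (lam' (i.val + 1) + (j.val : ℤ) - (i.val : ℤ))).submatrix
        Fin.succ (Fin.last m).succAbove =
        Matrix.of fun i j : Fin (m + 1 - 1) =>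
        sigExt n (m+1) (lam' (i.val + 2) - 1 + (j.val : ℤ) - (i.val : ℤ)) := by
      ext i j
      simp only [Matrix.submatrix_apply, Matrix.of_apply, Fin.succAbove_last,
        Fin.val_succ, Fin.coe_castSucc]
      congr 1
      push_cast
      ring
    rw [hsub]
    ring_nf
    rw [pow_mul']
    norm_num
  · intro j _ hj
    have hjm : (j:ℕ) < m := Fin.val_lt_last hj
    have h1 : (n:ℤ) - ((m+1:ℕ):ℤ) < lam' 1 + ((j:ℕ):ℤ) := by
      rw [hfirst]; push_cast; omega
    have h2 : lam' 1 + ((j:ℕ):ℤ) < (n:ℤ) := by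
      rw [hfirst]; push_cast; omega
    have hz := sigExt_gap n (m+1) hkn _ h1 h2
    simp [hz]
  · intro h
    exact absurd (Finset.mem_univ _) h
end
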